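/- Let $E,A\in\mathbb{C}^{n\times n}$, $B\in\mathbb{C}^{n\times m}$, let $z_1,\dots,z_S\in\mathbb{C}$ be distinct points such that $z_jE-A$ is invertible, and set $G(z_j)=(z_jE-A)^{-1}B$. Let $q_1,\dots,q_S\in\mathbb{C}$, define $Q(z)=\sum_{j=1}^S q_j/(z-z_j)$ and the barycentric surrogate $\widetilde{G}(z)=\big(\sum_{j=1}^S q_j G(z_j)/(z-z_j)\big)/Q(z)$. Then for every $z\notin\{z_1,\dots,z_S\}$ with $Q(z)\neq 0$, the residual satisfies $Q(z)\big((zE-A)\widetilde{G}(z)-B\big)=\sum_{j=1}^S q_j E\,G(z_j)$, a matrix independent of $z$. -/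
import Mathlib


/-- The barycentric state surrogate's residual, multiplied by the
barycentric denominator `Q`, equals the `z`-independent matrix `∑ j, q j • (E * G j)`. -/
theorem loewner_residual_identity
    {n m S : ℕ}
    (E A : Matrix (Fin n) (Fin n) ℂ) (B : Matrix (Fin n) (Fin m) ℂ)
    (z : Fin S → ℂ) (hz : Function.Injective z)
    (hinv : ∀ j, IsUnit (z j • E - A))
    (q : Fin S → ℂ)
    (G : Fin S → Matrix (Fin n) (Fin m) ℂ)
    (hG : ∀ j, G j = (z j • E - A)⁻¹ * B)
    (Q : ℂ → ℂ) (hQ : ∀ w, Q w = ∑ j, q j / (w - z j))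
    (Gt : ℂ → Matrix (Fin n) (Fin m) ℂ)
    (hGt : ∀ w, Gt w = (Q w)⁻¹ • ∑ j, (q j / (w - z j)) • G j) :
    ∀ w : ℂ, w ∉ Set.range z → Q w ≠ 0 →
      Q w • ((w • E - A) * Gt w - B) = ∑ j, q j • (E * G j) := by
  intro w hw hQw
  have hwz : ∀ j, w - z j ≠ 0 := by
    intro j h
    exact hw ⟨j, by linear_combination -h⟩
  have hGj : ∀ j, (w • E - A) * G j = (w - z j) • (E * G j) + B := by
    intro j
    have hB : (z j • E - A) * G j = B := by
      rw [hG j, ← Matrix.mul_assoc, Matrix.mul_nonsing_inv _ ((Matrix.isUnit_iff_isUnit_det _).mp (hinv j)), Matrix.one_mul]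
    have : (w • E - A) = (w - z j) • E + (z j • E - A) := by
      module
    rw [this, Matrix.add_mul, hB, Matrix.smul_mul]
  calc Q w • ((w • E - A) * Gt w - B)
      = (w • E - A) * (∑ j, (q j / (w - z j)) • G j) - Q w • B := by
        rw [hGt, Matrix.mul_smul, smul_sub, smul_smul, mul_inv_cancel₀ hQw, one_smul]
    _ = ∑ j, q j • (E * G j) := by
        rw [Matrix.mul_sum, hQ, Finset.sum_smul]
        rw [← Finset.sum_sub_distrib]
        apply Finset.sum_congr rfl
        intro j _
        rw [Matrix.mul_smul, hGj j, smul_add, smul_smul,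
          div_mul_cancel₀ _ (hwz j)]
        simp
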